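/- Let G be a group and let ℳ denote the set of bounded operators on c₀(G,K) of the form A_η with matrix (A_η)_{a,b} = η_{a⁻¹b} for η ∈ c₀(G,K). Then the map η ↦ A_η is an isometric K-linear bijection from c₀(G,K) onto ℳ, and the composition A_η ∘ A_ζ equals A_θ where θ_d = ∑_{l∈G} η_l ζ_{l⁻¹ d} (a convergent sum in K). -/

import Mathlib

set_option linter.unusedSectionVars false

open ZeroAtInfty Filter

noncomputable section

variable {J : Type*} [TopologicalSpace J] [DiscreteTopology J]
variable {K : Type*} [NontriviallyNormedField K]

/-- The standard basis vector `δ_j` in `c₀(J, K)` (the indicator function of `j`). -/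
def delta (j : J) : C₀(J, K) :=
  letI := Classical.decEq J
  ⟨⟨fun i => if i = j then (1 : K) else 0, continuous_of_discreteTopology⟩, by
    refine Tendsto.congr' ?_ tendsto_const_nhds
    rw [cocompact_eq_cofinite]
    filter_upwards [(Set.finite_singleton j).compl_mem_cofinite] with i hi
    simp only [Set.mem_compl_iff, Set.mem_singleton_iff] at hi
    simp [hi]⟩

lemma c0_norm_apply_le (x : C₀(J, K)) (i : J) : ‖x i‖ ≤ ‖x‖ := by
  rw [← ZeroAtInftyContinuousMap.norm_toBCF_eq_norm]
  exact x.toBCF.norm_coe_le_norm i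

lemma c0_norm_le_of_forall {x : C₀(J, K)} {C : ℝ} (hC : 0 ≤ C) (h : ∀ i, ‖x i‖ ≤ C) :
    ‖x‖ ≤ C := by
  rw [← ZeroAtInftyContinuousMap.norm_toBCF_eq_norm]
  exact (BoundedContinuousFunction.norm_le hC).2 h

/-- Precomposition with a bijection of the (discrete) index set, as a continuous
linear operator on `c₀(J, K)`. -/
def precompCLM (σ : J ≃ J) : C₀(J, K) →L[K] C₀(J, K) :=
  LinearMap.mkContinuous
    (ZeroAtInftyContinuousMap.compLinearMap
      (⟨⟨σ, continuous_of_discreteTopology⟩, by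
          simpa [cocompact_eq_cofinite] using σ.injective.tendsto_cofinite⟩ : CocompactMap J J))
    1
    (fun f => by
      rw [one_mul]
      exact c0_norm_le_of_forall (norm_nonneg f) fun i => c0_norm_apply_le f (σ i))

@[simp] lemma precompCLM_apply (σ : J ≃ J) (f : C₀(J, K)) (i : J) :
    precompCLM σ f i = f (σ i) := rfl

variable {G : Type*} [Group G] [TopologicalSpace G] [DiscreteTopology G]

/-- The right regular representation: `(U_g x)_a = x_{a g}`. -/
def U (g : G) : C₀(G, K) →L[K] C₀(G, K) := precompCLM (Equiv.mulRight g)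

/-- The left regular representation: `(V_g x)_a = x_{g⁻¹ a}`. -/
def V (g : G) : C₀(G, K) →L[K] C₀(G, K) := precompCLM (Equiv.mulLeft g⁻¹)

/-- The flip operator `(W x)_a = x_{a⁻¹}`. -/
def Wop : C₀(G, K) →L[K] C₀(G, K) := precompCLM (Equiv.inv G)

end

noncomputable section Aux

open IsUltrametricDist Topology

variable {J : Type*} [TopologicalSpace J] [DiscreteTopology J]
variable {K : Type*} [NontriviallyNormedField K]

lemma delta_apply_self (j : J) : (delta j : C₀(J, K)) j = 1 := by
  simp [delta]

lemma delta_apply_ne {i j : J} (h : i ≠ j) : (delta j : C₀(J, K)) i = 0 := by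
  simp [delta, h]

lemma c0_norm_eq_iSup (x : C₀(J, K)) : ‖x‖ = ⨆ i, ‖x i‖ := by
  rw [← ZeroAtInftyContinuousMap.norm_toBCF_eq_norm,
    BoundedContinuousFunction.norm_eq_iSup_norm]
  rfl

lemma finite_of_c0 (x : C₀(J, K)) {ε : ℝ} (hε : 0 < ε) : {a : J | ε ≤ ‖x a‖}.Finite := by
  have h := x.zero_at_infty'
  rw [cocompact_eq_cofinite] at h
  have h2 : ∀ᶠ a in cofinite, dist (x a) 0 < ε := (Metric.tendsto_nhds.mp h) ε hε
  refine (Filter.eventually_cofinite.mp h2).subset fun a ha => ?_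
  simp only [Set.mem_setOf_eq, dist_zero_right, not_lt] at *
  exact ha

lemma c0_sum_apply {β : Type*} (s : Finset β) (f : β → C₀(J, K)) (a : J) :
    (∑ b ∈ s, f b) a = ∑ b ∈ s, f b a := by
  classical
  induction s using Finset.induction with
  | empty => simp
  | insert _ _ h ih => simp [Finset.sum_insert h, ih]

lemma norm_delta (j : J) : ‖(delta j : C₀(J, K))‖ = 1 := by
  refine le_antisymm (c0_norm_le_of_forall zero_le_one fun i => ?_) ?_
  · by_cases h : i = j
    · subst h; simp [delta_apply_self]
    · simp [delta_apply_ne h]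
  · have := c0_norm_apply_le (delta j : C₀(J, K)) j
    rwa [delta_apply_self, norm_one] at this

def evalCLM (a : J) : C₀(J, K) →L[K] K :=
  LinearMap.mkContinuous
    { toFun := fun x => x a, map_add' := fun x y => rfl, map_smul' := fun c x => rfl } 1
    (fun x => by simpa using c0_norm_apply_le x a)

@[simp] lemma evalCLM_apply (a : J) (x : C₀(J, K)) : (evalCLM (K := K) a) x = x a := rfl

lemma hasSum_delta (x : C₀(J, K)) : HasSum (fun b => x b • (delta b : C₀(J, K))) x := by
  classical
  rw [HasSum, SummationFilter.unconditional_filter, Metric.tendsto_atTop]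
  intro ε hε
  refine ⟨(finite_of_c0 x (half_pos hε)).toFinset, fun s hs => ?_⟩
  rw [dist_eq_norm]
  refine lt_of_le_of_lt (c0_norm_le_of_forall (half_pos hε).le fun a => ?_) (half_lt_self hε)
  have term : ∀ b, (x b • (delta b : C₀(J, K))) a = if a = b then x a else 0 := by
    intro b
    by_cases h : a = b
    · subst h; simp [delta_apply_self]
    · simp [delta_apply_ne h, h]
  have hsum : (∑ b ∈ s, x b • (delta b : C₀(J, K))) a = if a ∈ s then x a else 0 := by
    rw [c0_sum_apply, Finset.sum_congr rfl (fun b _ => term b), Finset.sum_ite_eq s a fun _ => x a]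
  rw [ZeroAtInftyContinuousMap.sub_apply, hsum]
  by_cases ha : a ∈ s
  · simp [ha, (half_pos hε).le]
  · rw [if_neg ha, zero_sub, norm_neg]
    have : a ∉ (finite_of_c0 x (half_pos hε)).toFinset := fun h => ha (hs h)
    simp only [Set.Finite.mem_toFinset, Set.mem_setOf_eq, not_le] at this
    exact this.le

end Aux

noncomputable section Main

open IsUltrametricDist Topology

variable {K : Type*} [NontriviallyNormedField K] [CompleteSpace K] [IsUltrametricDist K]
variable {G : Type*} [Group G] [TopologicalSpace G] [DiscreteTopology G]

lemma expansion {η : C₀(G, K)} {A : C₀(G, K) →L[K] C₀(G, K)}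
    (hA : ∀ a b : G, A (delta b) a = η (a⁻¹ * b)) (x : C₀(G, K)) (a : G) :
    HasSum (fun b => x b * η (a⁻¹ * b)) (A x a) := by
  have h1 := (hasSum_delta x).mapL A
  have h2 := h1.mapL (evalCLM (K := K) a)
  simp only [evalCLM_apply, map_smul] at h2
  refine h2.congr_fun fun b => ?_
  simp only [ZeroAtInftyContinuousMap.smul_apply, smul_eq_mul, hA]

lemma summable_conv (η x : C₀(G, K)) (a : G) :
    Summable fun b => x b * η (a⁻¹ * b) := by
  apply NonarchimedeanAddGroup.summable_of_tendsto_cofinite_zero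
  rw [tendsto_zero_iff_norm_tendsto_zero]
  have hx : Tendsto (fun b => ‖x b‖) cofinite (𝓝 0) := by
    have h := x.zero_at_infty'
    rw [cocompact_eq_cofinite] at h
    simpa using h.norm
  have hb : Tendsto (fun b => ‖x b‖ * ‖η‖) cofinite (𝓝 0) := by
    simpa using hx.mul_const ‖η‖
  refine squeeze_zero (fun b => norm_nonneg _) (fun b => ?_) hb
  rw [norm_mul]
  exact mul_le_mul_of_nonneg_left (c0_norm_apply_le _ _) (norm_nonneg _)

lemma conv_zero_at_infty (η x : C₀(G, K)) :
    Tendsto (fun a : G => ∑' b, x b * η (a⁻¹ * b)) (cocompact G) (nhds 0) := by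
  classical
  rw [cocompact_eq_cofinite, NormedAddCommGroup.tendsto_nhds_zero]
  intro ε hε
  rw [eventually_cofinite]
  set M := max ‖η‖ 1 with hMdef
  set N := max ‖x‖ 1 with hNdef
  have hM : 0 < M := lt_max_of_lt_right zero_lt_one
  have hN : 0 < N := lt_max_of_lt_right zero_lt_one
  have hFx : {b : G | ε / (2 * M) ≤ ‖x b‖}.Finite := finite_of_c0 x (by positivity)
  have hFη : {d : G | ε / (2 * N) ≤ ‖η d‖}.Finite := finite_of_c0 η (by positivity)
  refine ((hFx.prod hFη).image (fun p => p.1 * p.2⁻¹)).subset fun a ha => ?_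
  simp only [Set.mem_setOf_eq, not_lt] at ha
  by_contra hmem
  have key : ∀ b : G, ‖x b * η (a⁻¹ * b)‖ ≤ ε / 2 := by
    intro b
    rw [norm_mul]
    by_cases hb : ε / (2 * M) ≤ ‖x b‖
    · by_cases hd : ε / (2 * N) ≤ ‖η (a⁻¹ * b)‖
      · exfalso
        exact hmem ⟨(b, a⁻¹ * b), Set.mk_mem_prod hb hd, by group⟩
      · push_neg at hd
        calc ‖x b‖ * ‖η (a⁻¹ * b)‖ ≤ N * (ε / (2 * N)) := by
              apply mul_le_mul ((c0_norm_apply_le _ _).trans (le_max_left _ _)) hd.le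
                (norm_nonneg _) hN.le
          _ = ε / 2 := by field_simp
    · push_neg at hb
      calc ‖x b‖ * ‖η (a⁻¹ * b)‖ ≤ (ε / (2 * M)) * M := by
            apply mul_le_mul hb.le ((c0_norm_apply_le _ _).trans (le_max_left _ _))
              (norm_nonneg _) (by positivity)
        _ = ε / 2 := by field_simp
  have hle := norm_tsum_le_of_forall_le_of_nonneg (by positivity : (0:ℝ) ≤ ε / 2) key
  linarith

def Aop (η : C₀(G, K)) : C₀(G, K) →L[K] C₀(G, K) :=
  LinearMap.mkContinuous
    { toFun := fun x =>
        ⟨⟨fun a => ∑' b, x b * η (a⁻¹ * b), continuous_of_discreteTopology⟩,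
          conv_zero_at_infty η x⟩
      map_add' := fun x y => by
        ext a
        simp only [ZeroAtInftyContinuousMap.coe_mk, ContinuousMap.coe_mk,
          ZeroAtInftyContinuousMap.add_apply]
        rw [← Summable.tsum_add (summable_conv η x a) (summable_conv η y a)]
        exact tsum_congr fun b => by rw [add_mul]
      map_smul' := fun c x => by
        ext a
        simp only [ZeroAtInftyContinuousMap.coe_mk, ContinuousMap.coe_mk,
          ZeroAtInftyContinuousMap.smul_apply, RingHom.id_apply, smul_eq_mul]
        rw [← tsum_mul_left]
        exact tsum_congr fun b => by rw [mul_assoc] }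
    ‖η‖
    (fun x => by
      refine c0_norm_le_of_forall (by positivity) fun a => ?_
      refine norm_tsum_le_of_forall_le_of_nonneg (by positivity) fun b => ?_
      rw [norm_mul, mul_comm ‖η‖ ‖x‖]
      exact mul_le_mul (c0_norm_apply_le _ _) (c0_norm_apply_le _ _) (norm_nonneg _)
        (norm_nonneg _))

lemma Aop_matrix (η : C₀(G, K)) (a b : G) : Aop η (delta b) a = η (a⁻¹ * b) := by
  show ∑' c, (delta b : C₀(G, K)) c * η (a⁻¹ * c) = η (a⁻¹ * b)
  rw [tsum_eq_single b]
  · rw [delta_apply_self, one_mul]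
  · intro c hc
    rw [delta_apply_ne hc, zero_mul]

end Main


open ZeroAtInfty Filter

/-- For `η ∈ c₀(G, K)` there is a unique bounded operator `A_η` on
`c₀(G, K)` with matrix `(A_η)_{a,b} = η_{a⁻¹ b}`; the correspondence `η ↦ A_η` is
isometric (`‖A_η‖ = ‖η‖ = sup_g |η_g|`, and it is `K`-linear since the matrix depends
linearly on `η`), and composition corresponds to convolution:
`(A_η ∘ A_ζ)` has matrix `θ_{a⁻¹b}` with `θ_d = ∑_l η_l ζ_{l⁻¹ d}`, a convergent sum. -/
theorem matrix_operators_convolution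
    {K : Type*} [NontriviallyNormedField K] [CompleteSpace K] [IsUltrametricDist K]
    {G : Type*} [Group G] [TopologicalSpace G] [DiscreteTopology G] :
    (∀ η : C₀(G, K), ∃! A : C₀(G, K) →L[K] C₀(G, K),
        ∀ a b : G, A (delta b) a = η (a⁻¹ * b)) ∧
    (∀ (η : C₀(G, K)) (A : C₀(G, K) →L[K] C₀(G, K)),
        (∀ a b : G, A (delta b) a = η (a⁻¹ * b)) → ‖A‖ = ⨆ g : G, ‖η g‖) ∧
    (∀ (η ζ : C₀(G, K)) (A B : C₀(G, K) →L[K] C₀(G, K)),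
        (∀ a b : G, A (delta b) a = η (a⁻¹ * b)) →
        (∀ a b : G, B (delta b) a = ζ (a⁻¹ * b)) →
        ∀ a b : G, HasSum (fun l : G => η l * ζ (l⁻¹ * (a⁻¹ * b))) ((A.comp B) (delta b) a)) := by
  refine ⟨fun η => ⟨Aop η, Aop_matrix η, fun B hB => ?_⟩, fun η A hA => ?_, ?_⟩
  · -- uniqueness
    ext x a
    exact (expansion hB x a).unique (expansion (Aop_matrix η) x a)
  · -- norm
    rw [← c0_norm_eq_iSup η]
    refine le_antisymm (ContinuousLinearMap.opNorm_le_bound _ (norm_nonneg η) fun x => ?_) ?_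
    · refine c0_norm_le_of_forall (by positivity) fun a => ?_
      rw [← (expansion hA x a).tsum_eq]
      refine IsUltrametricDist.norm_tsum_le_of_forall_le_of_nonneg (by positivity) fun b => ?_
      rw [norm_mul, mul_comm ‖η‖ ‖x‖]
      exact mul_le_mul (c0_norm_apply_le _ _) (c0_norm_apply_le _ _) (norm_nonneg _)
        (norm_nonneg _)
    · calc ‖η‖ ≤ ‖A (delta 1)‖ := by
            rw [c0_norm_eq_iSup]
            refine ciSup_le fun g => ?_
            have h := hA g⁻¹ 1
            rw [mul_one, inv_inv] at h
            rw [← h]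
            exact c0_norm_apply_le _ _
        _ ≤ ‖A‖ * ‖(delta 1 : C₀(G, K))‖ := A.le_opNorm _
        _ = ‖A‖ := by rw [norm_delta, mul_one]
  · -- convolution
    intro η ζ A B hA hB a b
    have h := expansion hA (B (delta b)) a
    have h2 : HasSum ((fun c => (B (delta b)) c * η (a⁻¹ * c)) ∘ (Equiv.mulLeft a))
        (A (B (delta b)) a) := (Equiv.mulLeft a).hasSum_iff.2 h
    rw [ContinuousLinearMap.comp_apply]
    refine h2.congr_fun fun l => ?_
    simp only [Function.comp_apply, Equiv.coe_mulLeft, hB]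
    rw [mul_comm]
    congr 1
    · congr 1; group
    · congr 1; group
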